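/- arXiv:1704.07041 — 5 statements merged into one kernel-verified Lean document; each statement's English description precedes it below -/
import Mathlib

section
/- Let G be a group admitting an epimorphism f: G → Γ with kernel K. Suppose every subgroup of finite index in K has finite abelianization (i.e. K has virtual first Betti number zero). Then for every finite index normal subgroup H of G, the kernel of the induced map H₁(H;ℚ) → H₁(f(H);ℚ) is zero, i.e. the restriction f: H → f(H) induces an isomorphism on first rational homology. -/
open scoped TensorProduct

/-- First rational homology `H₁(G;ℚ)` of a group, i.e. the abelianization tensored with `ℚ`. -/
def H1Q (G : Type*) [Group G] : Type _ :=
  ℚ ⊗[ℤ] (Additive (Abelianization G))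

noncomputable instance (G : Type*) [Group G] : AddCommGroup (H1Q G) :=
  inferInstanceAs (AddCommGroup (ℚ ⊗[ℤ] (Additive (Abelianization G))))

noncomputable instance (G : Type*) [Group G] : Module ℚ (H1Q G) :=
  inferInstanceAs (Module ℚ (ℚ ⊗[ℤ] (Additive (Abelianization G))))

/-- The map `H₁(G;ℚ) → H₁(H;ℚ)` induced by a group homomorphism `f : G → H`. -/
noncomputable def H1QMap {G H : Type*} [Group G] [Group H] (f : G →* H) :
    H1Q G →ₗ[ℤ] H1Q H :=
  LinearMap.lTensor ℚ (MonoidHom.toAdditive (Abelianization.map f)).toIntLinearMap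

lemma tensor_finite_subsingleton (M : Type*) [AddCommGroup M] [Finite M] :
    Subsingleton (ℚ ⊗[ℤ] M) := by
  constructor
  suffices h : ∀ x : ℚ ⊗[ℤ] M, x = 0 by intro a b; rw [h a, h b]
  intro x
  induction x using TensorProduct.induction_on with
  | zero => rfl
  | tmul q m =>
      obtain ⟨n, hn, hnm⟩ : ∃ n : ℕ, 0 < n ∧ n • m = 0 :=
        ⟨Nat.card M, Nat.card_pos, by
          have := addOrderOf_dvd_natCard m
          obtain ⟨k, hk⟩ := this
          rw [hk, mul_comm, mul_smul, addOrderOf_nsmul_eq_zero m, smul_zero]⟩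
      have : q = (n : ℤ) • (q / n) := by
        have hn0 : (n : ℚ) ≠ 0 := by exact_mod_cast hn.ne'
        rw [zsmul_eq_mul]; push_cast; field_simp
      rw [this, TensorProduct.smul_tmul, show (n:ℤ) • m = 0 by exact_mod_cast hnm,
        TensorProduct.tmul_zero]
  | add a b ha hb => rw [ha, hb, add_zero]

lemma abelianization_of_surjective (G : Type*) [Group G] :
    Function.Surjective (Abelianization.of : G → Abelianization G) :=
  fun a => Quotient.inductionOn' a fun x => ⟨x, rfl⟩

lemma ker_abmap_le_range {X Y : Type*} [Group X] [Group Y] (φ : X →* Y)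
    (hφ : Function.Surjective φ) :
    (Abelianization.map φ).ker ≤ ((Abelianization.of).comp φ.ker.subtype).range := by
  set N : Subgroup (Abelianization X) := ((Abelianization.of).comp φ.ker.subtype).range
  set π : X →* Abelianization X ⧸ N := (QuotientGroup.mk' N).comp Abelianization.of
  have hker : φ.ker ≤ π.ker := by
    intro x hx
    simp only [π, MonoidHom.mem_ker, MonoidHom.comp_apply, QuotientGroup.mk'_apply]
    rw [QuotientGroup.eq_one_iff]
    exact ⟨⟨x, hx⟩, rfl⟩
  set e := QuotientGroup.quotientKerEquivOfSurjective φ hφ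
  set ρ : Y →* Abelianization X ⧸ N := (QuotientGroup.lift φ.ker π hker).comp e.symm.toMonoidHom
  have hρ : ∀ x : X, ρ (φ x) = π x := by
    intro x
    have he : e (QuotientGroup.mk x) = φ x := QuotientGroup.kerLift_mk φ x
    have : e.symm (φ x) = QuotientGroup.mk x := by
      rw [MulEquiv.symm_apply_eq]; exact he.symm
    simp only [ρ, MonoidHom.comp_apply, MulEquiv.coe_toMonoidHom, this]
    rfl
  set ρ' : Abelianization Y →* Abelianization X ⧸ N := Abelianization.lift ρ
  have hcomp : ρ'.comp (Abelianization.map φ) = QuotientGroup.mk' N := by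
    apply Abelianization.hom_ext
    ext x
    simp only [MonoidHom.comp_apply, Abelianization.map_of]
    rw [show (ρ' (Abelianization.of (φ x)) = ρ (φ x)) from Abelianization.lift_apply_of ρ _, hρ x]
    rfl
  intro a ha
  have : (QuotientGroup.mk' N) a = 1 := by
    rw [← hcomp]
    simp only [MonoidHom.comp_apply]
    rw [MonoidHom.mem_ker.mp ha, map_one]
  rwa [← MonoidHom.mem_ker, QuotientGroup.ker_mk'] at this


/-- Let `G` be a group admitting an epimorphism `f : G → Γ` with kernel `K`. Suppose every
finite index subgroup of `K` has finite abelianization (`K` has virtual first Betti number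
zero). Then for every finite index normal subgroup `H` of `G`, the kernel of the induced
map `H₁(H;ℚ) → H₁(f(H);ℚ)` is zero, i.e. the restriction `f : H → f(H)` induces an
injection (hence isomorphism) on first rational homology. -/
theorem stmt4 {G Γ : Type*} [Group G] [Group Γ] (f : G →* Γ)
    (hsurj : Function.Surjective f)
    (hvb1 : ∀ L : Subgroup f.ker, L.FiniteIndex → Finite (Abelianization L))
    (H : Subgroup G) (hn : H.Normal) (hfi : H.FiniteIndex) :
    Function.Injective (H1QMap (f.subgroupMap H)) := by
  classical
  set φ : ↥H →* ↥(H.map f) := f.subgroupMap H with hφdef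
  -- the subgroup L = H ∩ K inside K
  haveI := hfi
  set L : Subgroup f.ker := H.subgroupOf f.ker with hLdef
  haveI hLab : Finite (Abelianization ↥L) := hvb1 L inferInstance
  -- surjection from L onto ker φ
  have hkerφ : ∀ x : ↥H, x ∈ φ.ker ↔ (x : G) ∈ f.ker := by
    intro x
    rw [MonoidHom.mem_ker, f.mem_ker]
    constructor
    · intro hx
      exact congrArg Subtype.val hx
    · intro hx
      exact Subtype.ext hx
  set κ : ↥L →* ↥φ.ker :=
    { toFun := fun l => ⟨⟨(l : f.ker), Subgroup.mem_subgroupOf.mp l.2⟩,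
        (hkerφ _).mpr (l : f.ker).2⟩
      map_one' := rfl
      map_mul' := fun a b => rfl } with hκdef
  have hκs : Function.Surjective κ := by
    intro x
    refine ⟨⟨⟨(x : ↥H), (hkerφ _).mp x.2⟩, Subgroup.mem_subgroupOf.mpr (x : ↥H).2⟩, ?_⟩
    ext; rfl
  haveI : Finite (Abelianization ↥φ.ker) := by
    apply Finite.of_surjective (Abelianization.map κ)
    intro a
    obtain ⟨y, rfl⟩ := abelianization_of_surjective _ a
    obtain ⟨l, rfl⟩ := hκs y
    exact ⟨Abelianization.of l, Abelianization.map_of κ l⟩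
  -- N is finite
  set c : ↥φ.ker →* Abelianization ↥H := (Abelianization.of).comp φ.ker.subtype with hcdef
  set N : Subgroup (Abelianization ↥H) := c.range with hNdef
  have hNset : (N : Set (Abelianization ↥H)) = Set.range (Abelianization.lift c) := by
    ext a
    constructor
    · rintro ⟨x, rfl⟩; exact ⟨Abelianization.of x, Abelianization.lift_apply_of c x⟩
    · rintro ⟨b, rfl⟩
      obtain ⟨x, rfl⟩ := abelianization_of_surjective _ b
      exact ⟨x, (Abelianization.lift_apply_of c x).symm⟩
  haveI hNfin : Finite ↥N := by
    have : (N : Set (Abelianization ↥H)).Finite := by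
      rw [hNset]; exact Set.finite_range _
    exact this.to_subtype
  -- the linear map
  set ψ : Additive (Abelianization ↥H) →ₗ[ℤ] Additive (Abelianization ↥(H.map f)) :=
    (MonoidHom.toAdditive (Abelianization.map φ)).toIntLinearMap with hψdef
  haveI : Finite ↥(LinearMap.ker ψ) := by
    apply Finite.of_injective (fun a : ↥(LinearMap.ker ψ) =>
      (⟨Additive.toMul a.1, ker_abmap_le_range φ (f.subgroupMap_surjective H)
        (MonoidHom.mem_ker.mpr (congrArg Additive.toMul (LinearMap.mem_ker.mp a.2)))⟩ : ↥N))
    intro a b hab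
    ext
    simpa using congrArg Subtype.val hab
  haveI : Subsingleton (ℚ ⊗[ℤ] ↥(LinearMap.ker ψ)) := tensor_finite_subsingleton _
  haveI : Module.Flat ℤ ℚ := IsLocalization.flat ℚ (nonZeroDivisors ℤ)
  have hex : Function.Exact ((LinearMap.ker ψ).subtype) ψ := LinearMap.exact_subtype_ker_map ψ
  have hex2 := Module.Flat.lTensor_exact ℚ hex
  have hmain : Function.Injective (LinearMap.lTensor ℚ ψ) := by
    rw [← LinearMap.ker_eq_bot, eq_bot_iff]
    intro x hx
    obtain ⟨y, rfl⟩ := (hex2 x).mp (LinearMap.mem_ker.mp hx)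
    rw [Subsingleton.elim y 0, map_zero]
    exact Submodule.zero_mem ⊥
  exact hmain
end

section
/- Let K be an infinite group with virtual first Betti number zero and Γ a nontrivial surface group. Then the product G = K × Γ is not commensurable to a surface group: there is no finite index subgroup H ≤ G admitting an epimorphism onto a surface group with finite kernel. -/
/-- The standard surface relator `∏ᵢ [aᵢ, bᵢ]` in the free group on `2g` generators. -/
def surfaceRelator (g : ℕ) : FreeGroup (Fin g × Bool) :=
  (((List.finRange g).map fun i =>
    FreeGroup.of (i, false) * FreeGroup.of (i, true) *
      (FreeGroup.of (i, false))⁻¹ * (FreeGroup.of (i, true))⁻¹)).prod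

/-- The fundamental group of the closed orientable surface of genus `g`. -/
def SurfaceGroup (g : ℕ) : Type :=
  PresentedGroup ({surfaceRelator g} : Set (FreeGroup (Fin g × Bool)))

instance (g : ℕ) : Group (SurfaceGroup g) :=
  inferInstanceAs (Group (PresentedGroup _))

namespace Stmt5Aux

variable (m : ℕ)

/-- The free group on the `a`-generators. -/
abbrev FF := FreeGroup (Fin (m+1))

/-- first generator -/
def x0 : FF m := FreeGroup.of 0

/-- exponent-sum in `x0` -/
def tau : FF m →* Multiplicative ℤ :=
  FreeGroup.lift (fun i => Fin.cases (Multiplicative.ofAdd (1 : ℤ))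
    (fun _ => (1 : Multiplicative ℤ)) i)

def kk (w : FF m) : ℤ := Multiplicative.toAdd (tau m w)

@[simp] lemma tau_x0 : tau m (x0 m) = Multiplicative.ofAdd (1 : ℤ) := by
  rw [x0, tau, FreeGroup.lift_apply_of]; simp

lemma kk_mul (u w : FF m) : kk m (u * w) = kk m u + kk m w := by
  simp [kk, map_mul]

lemma kk_x0_zpow (z : ℤ) : kk m (x0 m ^ z) = z := by
  rw [kk, map_zpow, tau_x0]
  simp

lemma kk_x0 : kk m (x0 m) = 1 := by
  have := kk_x0_zpow m 1
  rwa [zpow_one] at this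

lemma kk_mul_x0 (w : FF m) : kk m (w * x0 m) = kk m w + 1 := by
  rw [kk_mul, kk_x0]

/-- The basis of the big free group: conjugates of `b`-generators. -/
def MM := FreeGroup ((Fin m × FF m) ⊕ {v : FF m // tau m v = 1})

instance : Group (MM m) := inferInstanceAs (Group (FreeGroup _))

instance : IsFreeGroup (MM m) := inferInstanceAs (IsFreeGroup (FreeGroup _))

def gen (j : Fin m) (w : FF m) : MM m := FreeGroup.of (Sum.inl (j, w))

def dgen (v : {v : FF m // tau m v = 1}) : MM m := FreeGroup.of (Sum.inr v)

/-- the product of the non-`b₀` factors of the conjugated relator -/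
def PP (w : FF m) : MM m :=
  ((List.finRange m).map
    (fun j => gen m j (w * FreeGroup.of j.succ) * (gen m j w)⁻¹)).prod

def chP (b : FF m) : ℕ → MM m
  | 0 => 1
  | (n+1) => (PP m (b * x0 m ^ (n : ℤ)))⁻¹ * chP b n

def chN (b : FF m) : ℕ → MM m
  | 0 => 1
  | (n+1) => PP m (b * x0 m ^ (-(n : ℤ) - 1)) * chN b n

def Ch (b : FF m) : ℤ → MM m
  | Int.ofNat n => chP m b n
  | Int.negSucc n => chN m b (n+1)

lemma Ch_zero (b : FF m) : Ch m b 0 = 1 := rfl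

lemma Ch_ofNat (b : FF m) (n : ℕ) : Ch m b (Int.ofNat n) = chP m b n := rfl

lemma Ch_negSucc (b : FF m) (n : ℕ) : Ch m b (Int.negSucc n) = chN m b (n+1) := rfl

lemma Ch_succ (b : FF m) (z : ℤ) :
    Ch m b (z + 1) = (PP m (b * x0 m ^ z))⁻¹ * Ch m b z := by
  cases z with
  | ofNat n =>
      have h1 : (Int.ofNat n) + 1 = Int.ofNat (n+1) := rfl
      rw [h1, Ch_ofNat, Ch_ofNat, chP]
      norm_num
  | negSucc n =>
      cases n with
      | zero =>
          have h1 : (Int.negSucc 0) + 1 = 0 := rfl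
          rw [h1, Ch_zero, Ch_negSucc]
          have h2 : chN m b 1 = PP m (b * x0 m ^ (-(0:ℤ) - 1)) * chN m b 0 := rfl
          have h3 : chN m b 0 = 1 := rfl
          rw [h2, h3, mul_one]
          have h4 : (-(0:ℤ) - 1) = Int.negSucc 0 := rfl
          rw [h4, inv_mul_cancel]
      | succ n =>
          have h1 : (Int.negSucc (n+1)) + 1 = Int.negSucc n := rfl
          rw [h1, Ch_negSucc, Ch_negSucc]
          have h2 : chN m b (n+2) = PP m (b * x0 m ^ (-(↑(n+1):ℤ) - 1)) * chN m b (n+1) := rfl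
          rw [h2]
          have h3 : (Int.negSucc (n+1)) = (-(↑(n+1) : ℤ) - 1) := by
            rw [Int.negSucc_eq]; push_cast; ring
          rw [h3, ← mul_assoc, inv_mul_cancel, one_mul]


def vfun (w : FF m) : FF m := w * x0 m ^ (-(kk m w))

lemma tau_vfun (w : FF m) : tau m (vfun m w) = 1 := by
  have h : tau m w = Multiplicative.ofAdd (kk m w) := (ofAdd_toAdd _).symm
  rw [vfun, map_mul, map_zpow, tau_x0, h, ← ofAdd_zsmul, smul_eq_mul, mul_one,
    ← ofAdd_add, add_neg_cancel, ofAdd_zero]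

def vD (w : FF m) : {v : FF m // tau m v = 1} := ⟨vfun m w, tau_vfun m w⟩

lemma vfun_mul_pow (w : FF m) : vfun m w * x0 m ^ (kk m w) = w := by
  rw [vfun, mul_assoc, ← zpow_add, neg_add_cancel, zpow_zero, mul_one]

def eps (w : FF m) : MM m := Ch m (vfun m w) (kk m w) * dgen m (vD m w)

lemma vfun_mul_x0 (w : FF m) : vfun m (w * x0 m) = vfun m w := by
  rw [vfun, vfun, kk_mul_x0, mul_assoc]
  congr 1
  rw [← zpow_one_add]
  congr 1
  ring

lemma E1 (w : FF m) : eps m (w * x0 m) = (PP m w)⁻¹ * eps m w := by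
  have hvD : vD m (w * x0 m) = vD m w := Subtype.ext (vfun_mul_x0 m w)
  rw [eps, eps, kk_mul_x0, hvD, vfun_mul_x0, Ch_succ, vfun_mul_pow, mul_assoc]

lemma E0 (z : ℤ) (b : FF m) : eps m (b * x0 m ^ z) = Ch m b z * eps m b := by
  induction z using Int.induction_on with
  | zero => rw [zpow_zero, mul_one, Ch_zero, one_mul]
  | succ n ih =>
      rw [zpow_add_one, ← mul_assoc, E1, ih, Ch_succ, mul_assoc]
  | pred n ih =>
      have h1 := E1 m (b * x0 m ^ (-(n:ℤ) - 1))
      rw [mul_assoc, ← zpow_add_one] at h1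
      have h2 : (-(n:ℤ) - 1 + 1) = -(n:ℤ) := by ring
      rw [h2, ih] at h1
      have h3 := Ch_succ m b (-(n:ℤ) - 1)
      rw [h2] at h3
      -- h3 : Ch m b (-n) = (PP m (b * x0^(-n-1)))⁻¹ * Ch m b (-n-1)
      have h4 : Ch m b (-(n:ℤ) - 1) = PP m (b * x0 m ^ (-(n:ℤ) - 1)) * Ch m b (-(n:ℤ)) := by
        rw [h3, ← mul_assoc, mul_inv_cancel, one_mul]
      rw [h4, mul_assoc, h1, ← mul_assoc, mul_inv_cancel, one_mul]

/-- left-translation endomorphisms of `MM` -/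
def Tend (u : FF m) : MM m →* MM m :=
  FreeGroup.lift (fun s => Sum.rec (fun p => gen m p.1 (u * p.2))
    (fun v => eps m (u * v.1)) s)

@[simp] lemma Tend_gen (u : FF m) (j : Fin m) (w : FF m) :
    Tend m u (gen m j w) = gen m j (u * w) := FreeGroup.lift_apply_of

@[simp] lemma Tend_dgen (u : FF m) (v : {v : FF m // tau m v = 1}) :
    Tend m u (dgen m v) = eps m (u * v.1) := FreeGroup.lift_apply_of

lemma Tend_PP (u w : FF m) : Tend m u (PP m w) = PP m (u * w) := by
  rw [PP, PP, map_list_prod, List.map_map]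
  congr 1
  apply List.map_congr_left
  intro j _
  simp [mul_assoc]

lemma Tend_chP (u b : FF m) (n : ℕ) : Tend m u (chP m b n) = chP m (u * b) n := by
  induction n with
  | zero => rw [chP, chP, map_one]
  | succ n ih => rw [chP, chP, map_mul, map_inv, Tend_PP, ih, ← mul_assoc]

lemma Tend_chN (u b : FF m) (n : ℕ) : Tend m u (chN m b n) = chN m (u * b) n := by
  induction n with
  | zero => rw [chN, chN, map_one]
  | succ n ih => rw [chN, chN, map_mul, Tend_PP, ih, ← mul_assoc]

lemma Tend_Ch (u b : FF m) (z : ℤ) : Tend m u (Ch m b z) = Ch m (u * b) z := by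
  cases z with
  | ofNat n => rw [Ch_ofNat, Ch_ofNat, Tend_chP]
  | negSucc n => rw [Ch_negSucc, Ch_negSucc, Tend_chN]

lemma Tend_eps (u w : FF m) : Tend m u (eps m w) = eps m (u * w) := by
  rw [eps, map_mul, Tend_Ch, Tend_dgen]
  have h1 := E0 m (kk m w) (u * vfun m w)
  rw [mul_assoc, vfun_mul_pow] at h1
  rw [h1]
  rfl

lemma Tend_one (q : MM m) : Tend m 1 q = q := by
  have h : (Tend m 1) = MonoidHom.id (MM m) := by
    apply FreeGroup.ext_hom
    rintro (⟨j, w⟩ | v)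
    · show Tend m 1 (gen m j w) = gen m j w
      rw [Tend_gen, one_mul]
    · show Tend m 1 (dgen m v) = dgen m v
      rw [Tend_dgen, one_mul]
      -- eps of an element with tau = 1 is dgen
      have hk : kk m v.1 = 0 := by rw [kk, v.2, toAdd_one]
      have hvf : vfun m v.1 = v.1 := by rw [vfun, hk, neg_zero, zpow_zero, mul_one]
      have hvD : vD m v.1 = v := Subtype.ext hvf
      rw [eps, hk, Ch_zero, one_mul, hvD]
  rw [h]; rfl

lemma Tend_comp (u u' : FF m) (q : MM m) :
    Tend m u (Tend m u' q) = Tend m (u * u') q := by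
  have h : (Tend m u).comp (Tend m u') = Tend m (u * u') := by
    apply FreeGroup.ext_hom
    rintro (⟨j, w⟩ | v)
    · show Tend m u (Tend m u' (gen m j w)) = Tend m (u * u') (gen m j w)
      rw [Tend_gen, Tend_gen, Tend_gen, mul_assoc]
    · show Tend m u (Tend m u' (dgen m v)) = Tend m (u * u') (dgen m v)
      rw [Tend_dgen, Tend_eps, Tend_dgen, mul_assoc]
  exact DFunLike.congr_fun h q

/-- the action of `FF` on `MM` -/
def Aact : FF m →* MulAut (MM m) where
  toFun u :=
    { toFun := Tend m u
      invFun := Tend m u⁻¹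
      left_inv := fun q => by rw [Tend_comp, inv_mul_cancel, Tend_one]
      right_inv := fun q => by rw [Tend_comp, mul_inv_cancel, Tend_one]
      map_mul' := map_mul _ }
  map_one' := by
    ext q
    exact Tend_one m q
  map_mul' u u' := by
    ext q
    exact (Tend_comp m u u' q).symm

@[simp] lemma Aact_apply (u : FF m) (q : MM m) : Aact m u q = Tend m u q := rfl


/-- the model: semidirect product of the big free group by the free group on `a`'s -/
abbrev Tgrp := SemidirectProduct (MM m) (FF m) (Aact m)

open SemidirectProduct

/-- images of the `b`-generators -/
def EE (i : Fin (m+1)) (w : FF m) : MM m :=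
  Fin.cases (eps m w) (fun j => gen m j w) i

@[simp] lemma EE_zero (w : FF m) : EE m 0 w = eps m w := by simp [EE]

@[simp] lemma EE_succ (j : Fin m) (w : FF m) : EE m j.succ w = gen m j w := by simp [EE]

lemma Tend_EE (u : FF m) (i : Fin (m+1)) (w : FF m) :
    Tend m u (EE m i w) = EE m i (u * w) := by
  induction i using Fin.cases with
  | zero => rw [EE_zero, EE_zero, Tend_eps]
  | succ j => rw [EE_succ, EE_succ, Tend_gen]

/-- the assignment of generators of the surface group -/
def f0 : Fin (m+1) × Bool → Tgrp m := fun p =>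
  match p with
  | (i, false) => inr (FreeGroup.of i)
  | (i, true) => inl (EE m i 1)

lemma prod_EE_eq_one :
    ((List.finRange (m+1)).map
      (fun i => EE m i (FreeGroup.of i) * (EE m i 1)⁻¹)).prod = 1 := by
  rw [List.finRange_succ, List.map_cons, List.prod_cons, List.map_map]
  have h0 : EE m 0 (FreeGroup.of 0) * (EE m 0 1)⁻¹ = (PP m 1)⁻¹ := by
    have h1 := E1 m 1
    rw [one_mul] at h1
    rw [EE_zero, EE_zero, ← x0, h1, mul_assoc, mul_inv_cancel, mul_one]
  have h2 : (List.map ((fun i => EE m i (FreeGroup.of i) * (EE m i 1)⁻¹) ∘ Fin.succ)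
      (List.finRange m)).prod = PP m 1 := by
    have hfun : List.map ((fun i => EE m i (FreeGroup.of i) * (EE m i 1)⁻¹) ∘ Fin.succ)
        (List.finRange m)
        = List.map (fun j : Fin m => gen m j (1 * FreeGroup.of (Fin.succ j)) * (gen m j 1)⁻¹)
            (List.finRange m) := by
      apply List.map_congr_left
      intro j _
      simp only [Function.comp_apply, EE_succ, one_mul]
    rw [hfun, PP]
  rw [h0, h2, inv_mul_cancel]

lemma relcheck : ∀ r ∈ ({surfaceRelator (m+1)} : Set (FreeGroup (Fin (m+1) × Bool))),
    FreeGroup.lift (f0 m) r = 1 := by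
  intro r hr
  rw [Set.mem_singleton_iff] at hr
  subst hr
  rw [surfaceRelator, map_list_prod, List.map_map]
  have hterm : ∀ i : Fin (m+1),
      (FreeGroup.lift (f0 m))
        (FreeGroup.of (i, false) * FreeGroup.of (i, true) *
          (FreeGroup.of (i, false))⁻¹ * (FreeGroup.of (i, true))⁻¹)
      = inl (EE m i (FreeGroup.of i) * (EE m i 1)⁻¹) := by
    intro i
    rw [map_mul, map_mul, map_mul, map_inv, map_inv, FreeGroup.lift_apply_of, FreeGroup.lift_apply_of]
    have ha : f0 m (i, false) = inr (FreeGroup.of i) := rfl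
    have hb : f0 m (i, true) = inl (EE m i 1) := rfl
    rw [ha, hb, ← map_inv inr]
    have haut := (inl_aut (φ := Aact m) (FreeGroup.of i) (EE m i 1)).symm
    rw [haut, ← map_inv inl, ← map_mul]
    congr 1
    rw [Aact_apply, Tend_EE, mul_one]
  have hmap : (List.map (⇑(FreeGroup.lift (f0 m)) ∘ fun i =>
      FreeGroup.of (i, false) * FreeGroup.of (i, true) *
        (FreeGroup.of (i, false))⁻¹ * (FreeGroup.of (i, true))⁻¹)
      (List.finRange (m+1)))
      = List.map ((⇑(inl : MM m →* Tgrp m)) ∘ fun i => EE m i (FreeGroup.of i) * (EE m i 1)⁻¹)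
        (List.finRange (m+1)) := by
    apply List.map_congr_left
    intro i _
    exact hterm i
  rw [hmap, ← List.map_map, ← map_list_prod, prod_EE_eq_one, map_one]

/-- the embedding of the surface group into the model -/
def Phi : SurfaceGroup (m+1) →* Tgrp m := PresentedGroup.toGroup (relcheck m)

/-- the `a`-generators and `b`-generators of the surface group -/
def agen (i : Fin (m+1)) : SurfaceGroup (m+1) := PresentedGroup.of (i, false)

def bgen (i : Fin (m+1)) : SurfaceGroup (m+1) := PresentedGroup.of (i, true)

/-- section of the projection -/
def sig : FF m →* SurfaceGroup (m+1) :=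
  FreeGroup.lift (fun i => agen m i)

/-- conjugates of `b`-generators inside the surface group -/
def cc (i : Fin (m+1)) (w : FF m) : SurfaceGroup (m+1) :=
  sig m w * bgen m i * (sig m w)⁻¹

@[simp] lemma sig_of (i : Fin (m+1)) :
    sig m (FreeGroup.of i) = agen m i :=
  FreeGroup.lift_apply_of

lemma cc_mul (i : Fin (m+1)) (u w : FF m) :
    cc m i (u * w) = sig m u * cc m i w * (sig m u)⁻¹ := by
  rw [cc, cc, map_mul, mul_inv_rev]
  group

lemma SRfull (w : FF m) :
    ((List.finRange (m+1)).map
      (fun i => cc m i (w * FreeGroup.of i) * (cc m i w)⁻¹)).prod = 1 := by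
  have h1 : (PresentedGroup.mk {surfaceRelator (m+1)} (surfaceRelator (m+1)) :
      SurfaceGroup (m+1)) = 1 := by
    apply (QuotientGroup.eq_one_iff _).mpr
    exact Subgroup.subset_normalClosure rfl
  have h2 : (PresentedGroup.mk {surfaceRelator (m+1)} (surfaceRelator (m+1)) :
      SurfaceGroup (m+1)) =
      ((List.finRange (m+1)).map (fun i =>
        agen m i * bgen m i * (agen m i)⁻¹ * (bgen m i)⁻¹)).prod := by
    show (PresentedGroup.mk {surfaceRelator (m+1)}
      ((((List.finRange (m+1)).map fun i =>
        FreeGroup.of (i, false) * FreeGroup.of (i, true) *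
          (FreeGroup.of (i, false))⁻¹ * (FreeGroup.of (i, true))⁻¹)).prod) :
      SurfaceGroup (m+1)) = _
    rw [map_list_prod, List.map_map]
    congr 1
  have h3 := congrArg (fun s => sig m w * s * (sig m w)⁻¹) (h2.symm.trans h1)
  replace h3 := h3.trans (show sig m w * 1 * (sig m w)⁻¹ = 1 by group)
  rw [← h3]
  have h4 : ∀ i : Fin (m+1),
      cc m i (w * FreeGroup.of i) * (cc m i w)⁻¹ =
      (MulAut.conj (sig m w))
        (agen m i * bgen m i * (agen m i)⁻¹ * (bgen m i)⁻¹) := by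
    intro i
    rw [MulAut.conj_apply, cc, cc, map_mul, sig_of]
    group
  calc ((List.finRange (m+1)).map
      (fun i => cc m i (w * FreeGroup.of i) * (cc m i w)⁻¹)).prod
      = ((List.finRange (m+1)).map (⇑(MulAut.conj (sig m w)).toMonoidHom ∘ fun i =>
        agen m i * bgen m i * (agen m i)⁻¹ * (bgen m i)⁻¹)).prod := by
        congr 1
        apply List.map_congr_left
        intro i _
        exact h4 i
    _ = sig m w * ((List.finRange (m+1)).map (fun i =>
        agen m i * bgen m i * (agen m i)⁻¹ * (bgen m i)⁻¹)).prod * (sig m w)⁻¹ := by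
        rw [← List.map_map, ← map_list_prod]
        rfl


lemma SR0 (w : FF m) :
    cc m 0 (w * x0 m) * (cc m 0 w)⁻¹ *
      ((List.finRange m).map
        (fun j => cc m j.succ (w * FreeGroup.of j.succ) * (cc m j.succ w)⁻¹)).prod = 1 := by
  have h := SRfull m w
  rw [List.finRange_succ, List.map_cons, List.prod_cons, List.map_map] at h
  rw [← x0] at h
  convert h using 2
  rfl

/-- the projection of `MM` back to the surface group -/
def Psi1 : MM m →* SurfaceGroup (m+1) :=
  FreeGroup.lift (fun s => Sum.rec (fun p => cc m p.1.succ p.2) (fun v => cc m 0 v.1) s)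

@[simp] lemma Psi1_gen (j : Fin m) (w : FF m) :
    Psi1 m (gen m j w) = cc m j.succ w := FreeGroup.lift_apply_of

@[simp] lemma Psi1_dgen (v : {v : FF m // tau m v = 1}) :
    Psi1 m (dgen m v) = cc m 0 v.1 := FreeGroup.lift_apply_of

lemma Psi1_PP (w : FF m) :
    Psi1 m (PP m w) = cc m 0 w * (cc m 0 (w * x0 m))⁻¹ := by
  have hmap : Psi1 m (PP m w)
      = ((List.finRange m).map
          (fun j => cc m j.succ (w * FreeGroup.of j.succ) * (cc m j.succ w)⁻¹)).prod := by
    rw [PP, map_list_prod, List.map_map]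
    congr 1
    apply List.map_congr_left
    intro j _
    simp only [Function.comp_apply, map_mul, map_inv, Psi1_gen]
  have h := SR0 m w
  set A := cc m 0 (w * x0 m)
  set B := cc m 0 w
  set Q := ((List.finRange m).map
      (fun j => cc m j.succ (w * FreeGroup.of j.succ) * (cc m j.succ w)⁻¹)).prod
  have hQ : Q = B * A⁻¹ := by
    have h2 : (A * B⁻¹)⁻¹ * (A * B⁻¹ * Q) = (A * B⁻¹)⁻¹ * 1 := by rw [h]
    rw [← mul_assoc, inv_mul_cancel, one_mul, mul_one, mul_inv_rev, inv_inv] at h2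
    exact h2
  rw [hmap, hQ]

lemma Psi1_chP (b : FF m) (n : ℕ) :
    Psi1 m (chP m b n) = cc m 0 (b * x0 m ^ (n : ℤ)) * (cc m 0 b)⁻¹ := by
  induction n with
  | zero =>
      rw [chP, map_one]
      norm_num
  | succ n ih =>
      rw [chP, map_mul, map_inv, Psi1_PP, ih]
      have hx : b * x0 m ^ (n : ℤ) * x0 m = b * x0 m ^ ((n + 1 : ℕ) : ℤ) := by
        rw [mul_assoc, ← zpow_add_one]
        norm_num
      rw [hx, mul_inv_rev, inv_inv]
      group

lemma Psi1_chN (b : FF m) (n : ℕ) :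
    Psi1 m (chN m b n) = cc m 0 (b * x0 m ^ (-(n : ℤ))) * (cc m 0 b)⁻¹ := by
  induction n with
  | zero =>
      rw [chN, map_one]
      norm_num
  | succ n ih =>
      rw [chN, map_mul, Psi1_PP, ih]
      have hx : b * x0 m ^ (-(n : ℤ) - 1) * x0 m = b * x0 m ^ (-(n : ℤ)) := by
        rw [mul_assoc, ← zpow_add_one]
        norm_num
      have hx2 : (-(n : ℤ) - 1) = -((n+1 : ℕ) : ℤ) := by push_cast; ring
      rw [hx, ← hx2]
      group

lemma Psi1_Ch (b : FF m) (z : ℤ) :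
    Psi1 m (Ch m b z) = cc m 0 (b * x0 m ^ z) * (cc m 0 b)⁻¹ := by
  cases z with
  | ofNat n =>
      rw [Ch_ofNat, Psi1_chP]
      norm_cast
  | negSucc n =>
      rw [Ch_negSucc, Psi1_chN]
      have : (-((n+1 : ℕ) : ℤ)) = Int.negSucc n := by
        rw [Int.negSucc_eq]
        push_cast
        ring
      rw [this]

lemma Psi1_eps (w : FF m) : Psi1 m (eps m w) = cc m 0 w := by
  rw [eps, map_mul, Psi1_Ch, Psi1_dgen]
  have h : vfun m w * x0 m ^ (kk m w) = w := vfun_mul_pow m w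
  show cc m 0 (vfun m w * x0 m ^ kk m w) * (cc m 0 (vfun m w))⁻¹ * cc m 0 (vfun m w) = cc m 0 w
  rw [h, mul_assoc, inv_mul_cancel, mul_one]

lemma Psi1_EE (i : Fin (m+1)) (w : FF m) : Psi1 m (EE m i w) = cc m i w := by
  induction i using Fin.cases with
  | zero => rw [EE_zero, Psi1_eps]
  | succ j => rw [EE_succ, Psi1_gen]

lemma compat : ∀ u : FF m,
    (Psi1 m).comp ((Aact m u).toMonoidHom) =
      (MulAut.conj (sig m u)).toMonoidHom.comp (Psi1 m) := by
  intro u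
  apply FreeGroup.ext_hom
  rintro (⟨j, w⟩ | v)
  · show Psi1 m (Aact m u (gen m j w)) = MulAut.conj (sig m u) (Psi1 m (gen m j w))
    rw [Aact_apply, Tend_gen, Psi1_gen, Psi1_gen, MulAut.conj_apply, cc_mul]
  · show Psi1 m (Aact m u (dgen m v)) = MulAut.conj (sig m u) (Psi1 m (dgen m v))
    rw [Aact_apply, Tend_dgen, Psi1_eps, Psi1_dgen, MulAut.conj_apply, cc_mul]

/-- the retraction of the model back to the surface group -/
def Psi : Tgrp m →* SurfaceGroup (m+1) :=
  SemidirectProduct.lift (Psi1 m) (sig m) (compat m)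

lemma Psi_Phi (s : SurfaceGroup (m+1)) : Psi m (Phi m s) = s := by
  have h : (Psi m).comp (Phi m) = MonoidHom.id (SurfaceGroup (m+1)) := by
    apply PresentedGroup.ext
    rintro ⟨i, b⟩
    show Psi m (Phi m (PresentedGroup.of (i, b))) = PresentedGroup.of (i, b)
    rw [show Phi m (PresentedGroup.of (i, b)) = f0 m (i, b) from PresentedGroup.toGroup.of _]
    cases b
    · show Psi m (inr (FreeGroup.of i)) = _
      rw [Psi, SemidirectProduct.lift_inr, sig_of]
      rfl
    · show Psi m (inl (EE m i 1)) = _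
      rw [Psi, SemidirectProduct.lift_inl, Psi1_EE, cc, map_one, one_mul, inv_one, mul_one]
      rfl
  exact DFunLike.congr_fun h s

lemma Phi_injective : Function.Injective (Phi m) := by
  intro a b h
  rw [← Psi_Phi m a, ← Psi_Phi m b, h]

end Stmt5Aux

-- helper 1: nontrivial free groups have infinite abelianization
lemma free_infinite_ab (G : Type*) [Group G] [IsFreeGroup G] [Nontrivial G] :
    Infinite (Abelianization G) := by
  classical
  set γ := IsFreeGroup.Generators G with hγ
  have hne : Nonempty γ := by
    by_contra h
    rw [not_nonempty_iff] at h
    have h1 : ∀ x : FreeGroup γ, x = 1 := by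
      intro x
      induction x using FreeGroup.induction_on with
      | C1 => rfl
      | of x => exact h.elim x
      | inv_of x _ => exact h.elim x
      | mul x y hx hy => rw [hx, hy, one_mul]
    obtain ⟨a, b, hab⟩ := exists_pair_ne G
    apply hab
    have e := IsFreeGroup.toFreeGroup G
    have : e a = e b := by rw [h1 (e a), h1 (e b)]
    exact e.injective this
  obtain ⟨g₀⟩ := hne
  let η : G →* Multiplicative ℤ :=
    (FreeGroup.lift (fun c : γ => if c = g₀ then Multiplicative.ofAdd (1 : ℤ) else 1)).comp
      (IsFreeGroup.toFreeGroup G).toMonoidHom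
  have hη : Function.Surjective η := by
    intro z
    refine ⟨(IsFreeGroup.toFreeGroup G).symm (FreeGroup.of g₀ ^ (Multiplicative.toAdd z)), ?_⟩
    have : η ((IsFreeGroup.toFreeGroup G).symm (FreeGroup.of g₀ ^ (Multiplicative.toAdd z)))
        = (FreeGroup.lift (fun c : γ => if c = g₀ then Multiplicative.ofAdd (1 : ℤ) else 1))
          (FreeGroup.of g₀ ^ (Multiplicative.toAdd z)) := by
      simp [η]
    rw [this, map_zpow, FreeGroup.lift_apply_of, if_pos rfl]
    rw [← ofAdd_zsmul, smul_eq_mul, mul_one, ofAdd_toAdd]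
  have hsurj : Function.Surjective (Abelianization.lift η) := by
    intro z
    obtain ⟨g, rfl⟩ := hη z
    exact ⟨Abelianization.of g, Abelianization.lift_apply_of η g⟩
  exact Infinite.of_surjective _ hsurj

-- helper 2: finiteness of abelianization passes to quotients
lemma ab_finite_of_surjective {G H : Type*} [Group G] [Group H] (f : G →* H)
    (hf : Function.Surjective f) (h : Finite (Abelianization G)) :
    Finite (Abelianization H) := by
  have hs : Function.Surjective (Abelianization.map f) := by
    intro y
    obtain ⟨h', rfl⟩ : ∃ h', Abelianization.of h' = y := QuotientGroup.mk_surjective y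
    obtain ⟨g, rfl⟩ := hf h'
    exact ⟨Abelianization.of g, Abelianization.map_of f g⟩
  exact Finite.of_surjective _ hs

/-- Core: a surface group has no nontrivial subgroup with finite abelianization. -/
theorem surface_core {m : ℕ} (A : Subgroup (SurfaceGroup (m+1)))
    (hA : Nontrivial A) (hfin : Finite (Abelianization A)) : False := by
  classical
  set θ : A →* Stmt5Aux.FF m :=
    (SemidirectProduct.rightHom.comp (Stmt5Aux.Phi m)).comp A.subtype with hθdef
  by_cases hθ : ∀ a : A, θ a = 1
  · -- the subgroup lands in the free normal subgroup `MM`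
    have hright : ∀ a : A, (Stmt5Aux.Phi m ((a : SurfaceGroup (m+1)))).right = 1 :=
      fun a => hθ a
    let μ : A →* Stmt5Aux.MM m :=
      { toFun := fun a => (Stmt5Aux.Phi m ((a : SurfaceGroup (m+1)))).left
        map_one' := by
          show ((Stmt5Aux.Phi m) ((1 : A) : SurfaceGroup (m+1))).left = 1
          rw [OneMemClass.coe_one, map_one]
          rfl
        map_mul' := fun a b => by
          show ((Stmt5Aux.Phi m) (((a * b : A)) : SurfaceGroup (m+1))).left = _
          rw [Subgroup.coe_mul, map_mul, SemidirectProduct.mul_left, hright a, map_one,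
            MulAut.one_apply] }
    have hμinj : Function.Injective μ := by
      intro a b hab
      have h1 : Stmt5Aux.Phi m ((a : SurfaceGroup (m+1)))
          = Stmt5Aux.Phi m ((b : SurfaceGroup (m+1))) := by
        apply SemidirectProduct.ext
        · exact hab
        · rw [hright a, hright b]
      exact Subtype.ext (Stmt5Aux.Phi_injective m h1)
    set J := μ.range with hJ
    haveI : Nontrivial J := by
      obtain ⟨a, ha⟩ := exists_ne (1 : A)
      refine ⟨⟨μ a, ⟨a, rfl⟩⟩, 1, ?_⟩
      intro h
      rw [Subtype.ext_iff] at h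
      exact ha (hμinj (h.trans (map_one μ).symm))
    haveI h1 : Finite (Abelianization J) :=
      ab_finite_of_surjective μ.rangeRestrict μ.rangeRestrict_surjective hfin
    haveI h2 : Infinite (Abelianization J) := free_infinite_ab J
    exact not_finite (Abelianization J)
  · -- the subgroup has nontrivial projection to the free group `FF`
    push_neg at hθ
    obtain ⟨a, ha⟩ := hθ
    set J := θ.range with hJ
    haveI : Nontrivial J := by
      refine ⟨⟨θ a, ⟨a, rfl⟩⟩, 1, ?_⟩
      intro h
      rw [Subtype.ext_iff] at h
      exact ha h
    haveI h1 : Finite (Abelianization J) :=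
      ab_finite_of_surjective θ.rangeRestrict θ.rangeRestrict_surjective hfin
    haveI h2 : Infinite (Abelianization J) := free_infinite_ab J
    exact not_finite (Abelianization J)


/-- Let `K` be an infinite group with virtual first Betti number zero (every finite index
subgroup has finite abelianization) and `Γ` a nontrivial surface group (genus `g ≥ 1`).
Then the product `G = K × Γ` is not commensurable to a surface group: there is no finite
index subgroup `H ≤ G` admitting an epimorphism onto a surface group with finite kernel. -/
theorem stmt5 {K : Type*} [Group K] [Infinite K]
    (hvb1 : ∀ L : Subgroup K, L.FiniteIndex → Finite (Abelianization L))
    (g : ℕ) (hg : 1 ≤ g) :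
    ¬ ∃ (H : Subgroup (K × SurfaceGroup g)) (_ : H.FiniteIndex)
        (g' : ℕ) (_ : 1 ≤ g') (φ : H →* SurfaceGroup g'),
        Function.Surjective φ ∧ Finite φ.ker := by
  rintro ⟨H, hHfi, g', hg', φ, hsurj, hker⟩
  obtain ⟨m, rfl⟩ : ∃ m, g' = m + 1 := ⟨g' - 1, by omega⟩
  classical
  set Γ := SurfaceGroup g with hΓ
  set L : Subgroup K := H.comap (MonoidHom.inl K Γ) with hL
  haveI := hHfi
  haveI : Finite ((K × Γ) ⧸ H) := Subgroup.finite_quotient_of_finiteIndex (H := H)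
  -- compare cosets of L with cosets of H
  let qmap : K ⧸ L → (K × Γ) ⧸ H :=
    Quotient.map' (fun k => ((k, 1) : K × Γ)) (by
      intro a b hab
      rw [QuotientGroup.leftRel_apply] at hab ⊢
      have h1 : ((a, 1) : K × Γ)⁻¹ * (b, 1) = (a⁻¹ * b, 1) := by
        simp [Prod.ext_iff]
      rw [h1]
      exact hab)
  have hqinj : Function.Injective qmap := by
    intro x y
    refine Quotient.inductionOn₂' x y ?_
    intro a b h
    have h2 : (Quotient.mk'' ((a, 1) : K × Γ) : (K × Γ) ⧸ H)
        = Quotient.mk'' ((b, 1) : K × Γ) := h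
    have h3 := Quotient.eq''.mp h2
    rw [QuotientGroup.leftRel_apply] at h3
    apply Quotient.sound'
    rw [QuotientGroup.leftRel_apply]
    show a⁻¹ * b ∈ L
    rw [hL, Subgroup.mem_comap]
    have h4 : (MonoidHom.inl K Γ) (a⁻¹ * b) = ((a, 1) : K × Γ)⁻¹ * (b, 1) := by
      simp [Prod.ext_iff]
    rw [h4]
    exact h3
  haveI : Finite (K ⧸ L) := Finite.of_injective qmap hqinj
  haveI hLfi : L.FiniteIndex := Subgroup.finiteIndex_of_finite_quotient (H := L)
  haveI hLinf : Infinite L := by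
    by_contra hfin
    rw [not_infinite_iff_finite] at hfin
    haveI := hfin
    haveI : Finite K :=
      Finite.of_equiv _ (Subgroup.groupEquivQuotientProdSubgroup (s := L)).symm
    exact not_finite K
  -- the inclusion of L into H
  let ι : L →* H :=
    { toFun := fun l => ⟨((l : K), 1), l.2⟩
      map_one' := rfl
      map_mul' := fun a b => Subtype.ext (by
        show (((a * b : L) : K), (1 : Γ)) = ((a : K), (1 : Γ)) * ((b : K), (1 : Γ))
        simp [Prod.ext_iff]) }
  have hιinj : Function.Injective ι := by
    intro a b h
    rw [Subtype.ext_iff] at h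
    have : ((a : K), (1 : Γ)) = ((b : K), (1 : Γ)) := h
    rw [Prod.ext_iff] at this
    exact Subtype.ext this.1
  let χ : L →* SurfaceGroup (m+1) := φ.comp ι
  haveI hkerχ : Finite χ.ker := by
    haveI := hker
    have hinj : Function.Injective
        (fun x : χ.ker => (⟨ι x.1, x.2⟩ : φ.ker)) := by
      intro x y hxy
      have h5 : ι x.1 = ι y.1 := by
        have := congrArg (Subtype.val (p := fun z => z ∈ φ.ker)) hxy
        exact this
      exact Subtype.ext (hιinj h5)
    exact Finite.of_injective _ hinj
  set A : Subgroup (SurfaceGroup (m+1)) := χ.range with hA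
  haveI hAfin : Finite (Abelianization A) :=
    ab_finite_of_surjective χ.rangeRestrict χ.rangeRestrict_surjective (hvb1 L hLfi)
  haveI : Infinite A := by
    by_contra hAinf
    rw [not_infinite_iff_finite] at hAinf
    haveI := hAinf
    haveI : Finite (L ⧸ χ.ker) :=
      Finite.of_equiv _ (QuotientGroup.quotientKerEquivRange χ).symm.toEquiv
    haveI : Finite L :=
      Finite.of_equiv _ (Subgroup.groupEquivQuotientProdSubgroup (s := χ.ker)).symm
    exact not_finite L
  exact surface_core A inferInstance hAfin
end

section
/- Let G be a RFRS group and f: G → Γ an epimorphism with kernel K. Suppose that for every term Gᵢ of the RFRS filtration, the induced map H₁(Gᵢ;ℚ) → H₁(f(Gᵢ);ℚ) is injective (equivalently an isomorphism). Then f is injective, i.e. K is trivial. -/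
structure IsRFRSFiltration {G : Type*} [Group G] (Gs : ℕ → Subgroup G) : Prop where
  zero_eq_top : Gs 0 = ⊤
  antitone : ∀ i, Gs (i + 1) ≤ Gs i
  normal : ∀ i, (Gs i).Normal
  finiteIndex : ∀ i, (Gs i).FiniteIndex
  iInf_eq_bot : (⨅ i, Gs i) = ⊥
  factors : ∀ i,
    letI : ((Gs (i + 1)).subgroupOf (Gs i)).Normal := (normal (i + 1)).subgroupOf _
    ∃ β : (Abelianization ↥(Gs i) ⧸ CommGroup.torsion (Abelianization ↥(Gs i))) →*
        (↥(Gs i) ⧸ (Gs (i + 1)).subgroupOf (Gs i)),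
      ∀ x : ↥(Gs i),
        β (QuotientGroup.mk (Abelianization.of x)) = QuotientGroup.mk x

def IsRFRS (G : Type*) [Group G] : Prop :=
  ∃ Gs : ℕ → Subgroup G, IsRFRSFiltration Gs

open scoped TensorProduct

-- auxiliary: tensoring with ℚ kills only torsion
lemma aux_torsion {M : Type*} [AddCommGroup M] (x : M)
    (h : (1 : ℚ) ⊗ₜ[ℤ] x = (0 : ℚ ⊗[ℤ] M)) : ∃ n : ℕ, 0 < n ∧ n • x = 0 := by
  have hloc : IsLocalizedModule (nonZeroDivisors ℤ) (TensorProduct.mk ℤ ℚ M 1) :=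
    (isLocalizedModule_iff_isBaseChange (nonZeroDivisors ℤ) ℚ _).mpr
      (TensorProduct.isBaseChange ℤ M ℚ)
  have := hloc
  obtain ⟨s, hs⟩ := (IsLocalizedModule.eq_zero_iff (nonZeroDivisors ℤ)
    (TensorProduct.mk ℤ ℚ M 1)).mp h
  have hsne : (s : ℤ) ≠ 0 := nonZeroDivisors.coe_ne_zero s
  refine ⟨(s : ℤ).natAbs, Int.natAbs_pos.mpr hsne, ?_⟩
  have hz : ((s : ℤ)) • x = 0 := hs
  rcases Int.natAbs_eq (s : ℤ) with h1 | h1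
  · rw [← natCast_zsmul, ← h1, hz]
  · rw [← natCast_zsmul, ← neg_neg ((((s : ℤ).natAbs : ℤ))), ← h1, neg_zsmul, hz, neg_zero]

/-- Let `G` be a RFRS group and `f : G → Γ` an epimorphism with kernel `K`. Suppose that
for every term `Gᵢ` of the RFRS filtration, the induced map `H₁(Gᵢ;ℚ) → H₁(f(Gᵢ);ℚ)` is
injective (equivalently an isomorphism). Then `f` is injective, i.e. `K` is trivial. -/
theorem stmt6 {G Γ : Type*} [Group G] [Group Γ]
    (Gs : ℕ → Subgroup G) (hGs : IsRFRSFiltration Gs)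
    (f : G →* Γ) (hsurj : Function.Surjective f)
    (hinj : ∀ i, Function.Injective (H1QMap (f.subgroupMap (Gs i)))) :
    Function.Injective f := by
  rw [← MonoidHom.ker_eq_bot_iff]
  have key : ∀ i, f.ker ≤ Gs i := by
    intro i
    induction i with
    | zero => rw [hGs.zero_eq_top]; exact le_top
    | succ i ih =>
      intro k hk
      have hki : k ∈ Gs i := ih hk
      set k' : ↥(Gs i) := ⟨k, hki⟩ with hk'
      have h1 : f.subgroupMap (Gs i) k' = 1 := by
        ext
        simpa using hk
      have h2 : Abelianization.map (f.subgroupMap (Gs i)) (Abelianization.of k') = 1 := by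
        rw [Abelianization.map_of, h1, map_one]
      -- the element of H1Q
      set x : Additive (Abelianization ↥(Gs i)) := Additive.ofMul (Abelianization.of k') with hx
      have h3 : H1QMap (f.subgroupMap (Gs i)) ((1 : ℚ) ⊗ₜ[ℤ] x) = 0 := by
        show LinearMap.lTensor ℚ _ _ = 0
        rw [LinearMap.lTensor_tmul]
        have : (MonoidHom.toAdditive (Abelianization.map (f.subgroupMap (Gs i)))).toIntLinearMap x
            = 0 := by
          simp only [hx, AddMonoidHom.coe_toIntLinearMap, MonoidHom.toAdditive_apply_apply,
            h2]
          have : ((Abelianization.map (f.subgroupMap (Gs i)))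
              (Additive.toMul (Additive.ofMul (Abelianization.of k')))) = 1 := h2
          rw [this]
          rfl
        rw [this, TensorProduct.tmul_zero]
      have h4 : (1 : ℚ) ⊗ₜ[ℤ] x = (0 : H1Q ↥(Gs i)) := by
        apply hinj i
        rw [h3]
        exact (map_zero _).symm
      obtain ⟨n, hn, hnx⟩ := aux_torsion x h4
      have htor : Abelianization.of k' ∈ CommGroup.torsion (Abelianization ↥(Gs i)) := by
        rw [CommGroup.mem_torsion, isOfFinOrder_iff_pow_eq_one]
        exact ⟨n, hn, hnx⟩
      -- pass to the quotient by torsion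
      have h5 : (QuotientGroup.mk (Abelianization.of k') :
          Abelianization ↥(Gs i) ⧸ CommGroup.torsion (Abelianization ↥(Gs i))) = 1 :=
        (QuotientGroup.eq_one_iff _).mpr htor
      haveI : ((Gs (i + 1)).subgroupOf (Gs i)).Normal := (hGs.normal (i + 1)).subgroupOf _
      obtain ⟨β, hβ⟩ := hGs.factors i
      have h6 : (QuotientGroup.mk k' : ↥(Gs i) ⧸ (Gs (i + 1)).subgroupOf (Gs i)) = 1 := by
        rw [← hβ k', h5, map_one]
      have h7 : k' ∈ (Gs (i + 1)).subgroupOf (Gs i) := (QuotientGroup.eq_one_iff _).mp h6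
      exact h7
  rw [eq_bot_iff, ← hGs.iInf_eq_bot]
  exact le_iInf key
end

section
/- Every subgroup of a RFRS group is RFRS. -/
/-- Every subgroup of a RFRS group is RFRS. -/
theorem stmt9 {G : Type*} [Group G] (hG : IsRFRS G) (H : Subgroup G) :
    IsRFRS H := by
  obtain ⟨Gs, h⟩ := hG
  refine ⟨fun i => (Gs i).subgroupOf H, ?_, ?_, ?_, ?_, ?_, ?_⟩
  · simp [h.zero_eq_top, Subgroup.top_subgroupOf]
  · exact fun i => Subgroup.comap_mono (h.antitone i)
  · exact fun i => (h.normal i).comap _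
  · exact fun i => letI := h.finiteIndex i; Subgroup.instFiniteIndex_subgroupOf _ _
  · have : (⨅ i, (Gs i).subgroupOf H) = (⨅ i, Gs i).subgroupOf H :=
      (Subgroup.comap_iInf _ _).symm
    rw [this, h.iInf_eq_bot, Subgroup.bot_subgroupOf]
  · intro i
    set Ki := (Gs i).subgroupOf H with hKi
    set Ki1 := (Gs (i + 1)).subgroupOf H with hKi1
    letI : (Ki1.subgroupOf Ki).Normal := (((h.normal (i+1)).comap _).subgroupOf _)
    letI : ((Gs (i + 1)).subgroupOf (Gs i)).Normal := (h.normal (i+1)).subgroupOf _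
    -- the inclusion from Ki into Gs i
    let ι : ↥Ki →* ↥(Gs i) := MonoidHom.mk' (fun y => ⟨(y : H), y.2⟩) (fun a b => rfl)
    -- key fact: elements torsion mod commutator land in Gs (i+1)
    have key : ∀ (x : ↥Ki) (n : ℕ), 0 < n → x ^ n ∈ commutator ↥Ki →
        x ∈ Ki1.subgroupOf Ki := by
      intro x n hn hxn
      have hgn : ι x ^ n ∈ commutator ↥(Gs i) := by
        have : ι (x ^ n) ∈ Subgroup.map ι (commutator ↥Ki) := ⟨_, hxn, rfl⟩
        rw [map_pow] at this
        refine ?_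
        have hle : Subgroup.map ι (commutator ↥Ki) ≤ commutator ↥(Gs i) := by
          rw [commutator_def, Subgroup.map_commutator]
          exact Subgroup.commutator_mono le_top le_top
        exact hle this
      have htor : IsOfFinOrder (Abelianization.of (ι x)) := by
        refine isOfFinOrder_iff_pow_eq_one.mpr ⟨n, hn, ?_⟩
        rw [← map_pow]
        exact (QuotientGroup.eq_one_iff _).mpr hgn
      have h1 : (QuotientGroup.mk (Abelianization.of (ι x)) :
          Abelianization ↥(Gs i) ⧸ CommGroup.torsion (Abelianization ↥(Gs i))) = 1 :=
        (QuotientGroup.eq_one_iff _).mpr htor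
      obtain ⟨β, hβ⟩ := h.factors i
      have h2 : (QuotientGroup.mk (ι x) : ↥(Gs i) ⧸ (Gs (i + 1)).subgroupOf (Gs i)) = 1 := by
        rw [← hβ (ι x), h1, map_one]
      have h3 : ι x ∈ (Gs (i + 1)).subgroupOf (Gs i) := (QuotientGroup.eq_one_iff _).mp h2
      have h4 : ((x : H) : G) ∈ Gs (i + 1) := h3
      exact Subgroup.mem_subgroupOf.mpr h4
    -- build β by lifting twice
    let f : ↥Ki →* ↥Ki ⧸ Ki1.subgroupOf Ki := QuotientGroup.mk' _
    have hcomm : commutator ↥Ki ≤ f.ker := by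
      rw [commutator_def, Subgroup.commutator_le]
      intro g₁ _ g₂ _
      open scoped commutatorElement in
      have : ⁅g₁, g₂⁆ ∈ Ki1.subgroupOf Ki := by
        refine key _ 1 one_pos ?_
        rw [pow_one]
        exact Subgroup.commutator_mem_commutator (Subgroup.mem_top _) (Subgroup.mem_top _)
      simpa [f, MonoidHom.mem_ker, QuotientGroup.eq_one_iff] using this
    let β₁ : Abelianization ↥Ki →* ↥Ki ⧸ Ki1.subgroupOf Ki :=
      QuotientGroup.lift (commutator ↥Ki) f fun x hx => hcomm hx
    have htorker : ∀ t ∈ CommGroup.torsion (Abelianization ↥Ki), β₁ t = 1 := by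
      intro t ht
      obtain ⟨x, rfl⟩ := QuotientGroup.mk_surjective t
      obtain ⟨n, hn, hpow⟩ := isOfFinOrder_iff_pow_eq_one.mp ht
      have hxn : x ^ n ∈ commutator ↥Ki := by
        rw [← QuotientGroup.eq_one_iff]
        rw [QuotientGroup.mk_pow]
        exact hpow
      have hx := key x n hn hxn
      show f x = 1
      simpa [f, QuotientGroup.eq_one_iff] using hx
    refine ⟨QuotientGroup.lift (CommGroup.torsion (Abelianization ↥Ki)) β₁
      fun t ht => htorker t ht, fun x => rfl⟩
end

section
/- Let G be a group with normal subgroup K and quotient Γ = G/K. Suppose the image of H₁(K;ℚ) in H₁(G;ℚ) (the coinvariants map) is nonzero. Then for any finite index normal subgroup H ⊴ G containing K, the kernel of the induced map H₁(H;ℚ) → H₁(H/K;ℚ) is nonzero. -/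
open scoped TensorProduct

lemma H1QMap_comp {A B C : Type*} [Group A] [Group B] [Group C] (f : B →* C) (g : A →* B) :
    H1QMap (f.comp g) = (H1QMap f).comp (H1QMap g) := by
  unfold H1QMap
  erw [← LinearMap.lTensor_comp, ← Abelianization.map_comp]
  rfl

lemma H1QMap_one {A B : Type*} [Group A] [Group B] :
    H1QMap (1 : A →* B) = 0 := by
  unfold H1QMap
  have : (MonoidHom.toAdditive (Abelianization.map (1 : A →* B))).toIntLinearMap = 0 := by
    have h1 : Abelianization.map (1 : A →* B) = 1 := by
      apply Abelianization.hom_ext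
      ext a
      simp
    rw [h1]
    rfl
  rw [this, LinearMap.lTensor_zero]
  rfl

/-- Let `G` be a group with normal subgroup `K` and quotient `Γ = G/K`. Suppose the image
of `H₁(K;ℚ)` in `H₁(G;ℚ)` is nonzero. Then for any finite index normal subgroup `H ⊴ G`
containing `K`, the kernel of the induced map `H₁(H;ℚ) → H₁(H/K;ℚ)` is nonzero (where
`H/K` is realized as the image of `H` in `G/K`). -/
theorem stmt16 {G : Type*} [Group G] (K : Subgroup G) [K.Normal]
    (hne : H1QMap K.subtype ≠ 0)
    (H : Subgroup G) [H.Normal] [H.FiniteIndex] (hKH : K ≤ H) :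
    ¬ Function.Injective (H1QMap ((QuotientGroup.mk' K).subgroupMap H)) := by
  intro hinj
  have hcomp : ((QuotientGroup.mk' K).subgroupMap H).comp (Subgroup.inclusion hKH) = 1 := by
    ext k
    have : ((QuotientGroup.mk' K).subgroupMap H).comp (Subgroup.inclusion hKH) k =
        ⟨QuotientGroup.mk' K (k : G), ⟨(k : G), hKH k.2, rfl⟩⟩ := rfl
    rw [this]
    simp [QuotientGroup.eq_one_iff, k.2]
  have h0 : H1QMap (Subgroup.inclusion hKH) = 0 := by
    have := H1QMap_comp ((QuotientGroup.mk' K).subgroupMap H) (Subgroup.inclusion hKH)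
    rw [hcomp, H1QMap_one] at this
    ext x
    have := congrFun (congrArg (fun f => f.toFun) this.symm) x
    simpa using hinj (a₁ := H1QMap (Subgroup.inclusion hKH) x) (a₂ := 0) (by simpa using this)
  apply hne
  have : K.subtype = H.subtype.comp (Subgroup.inclusion hKH) := by ext; rfl
  rw [this, H1QMap_comp, h0, LinearMap.comp_zero]
end
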